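/- Let x : ℕ → ℕ be superadditive with x(n) ≥ 1 for all n ≥ 1, let y : ℕ → ℕ satisfy y(n) ≥ 1 for all n ≥ 1, and let (B_n)_{n≥0} be the factorial set associated with (x, y). Then for all n ≥ 0 and all 0 ≤ k ≤ n, the product B_k·B_{n−k} divides B_n. -/

import Mathlib

theorem stmt_4 (x y : ℕ → ℕ)
    (hsuper : ∀ m n, 1 ≤ m → 1 ≤ n → x m + x n ≤ x (m + n))
    (hx : ∀ n, 1 ≤ n → 1 ≤ x n) (hy : ∀ n, 1 ≤ n → 1 ≤ y n)
    (B : ℕ → ℕ) (hB : ∀ n, B n = ∏ k ∈ Finset.Icc 1 n, y k ^ x (n / k)) :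
    ∀ n k : ℕ, k ≤ n → B k * B (n - k) ∣ B n := by
  have hmono : ∀ a b, 1 ≤ a → a ≤ b → x a ≤ x b := by
    intro a b ha hab
    rcases Nat.eq_or_lt_of_le hab with h | h
    · exact h ▸ le_refl _
    · have h1 : x a + x (b - a) ≤ x b := by
        have := hsuper a (b - a) ha (by omega)
        rwa [Nat.add_sub_cancel' (le_of_lt h)] at this
      have := hx (b - a) (by omega)
      omega
  intro n k hkn
  have key : ∀ j, 1 ≤ j →
      (if j ≤ k then x (k / j) else 0) + (if j ≤ n - k then x ((n - k) / j) else 0)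
        ≤ x (n / j) := by
    intro j hj
    have hdiv : k / j + (n - k) / j ≤ n / j := by
      rw [Nat.le_div_iff_mul_le hj]
      have h1 := Nat.div_mul_le_self k j
      have h2 := Nat.div_mul_le_self (n - k) j
      have : (k / j + (n - k) / j) * j = k / j * j + (n - k) / j * j := by ring
      omega
    split_ifs with h1 h2 h2
    · have ha : 1 ≤ k / j := (Nat.one_le_div_iff hj).mpr h1
      have hb : 1 ≤ (n - k) / j := (Nat.one_le_div_iff hj).mpr h2
      calc x (k / j) + x ((n - k) / j) ≤ x (k / j + (n - k) / j) := hsuper _ _ ha hb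
        _ ≤ x (n / j) := hmono _ _ (by omega) hdiv
    · simpa using hmono (k / j) (n / j) ((Nat.one_le_div_iff hj).mpr h1)
        (Nat.div_le_div_right hkn)
    · simpa using hmono ((n - k) / j) (n / j) ((Nat.one_le_div_iff hj).mpr h2)
        (Nat.div_le_div_right (Nat.sub_le n k))
    · simp
  have hrw : ∀ m, m ≤ n →
      B m = ∏ j ∈ Finset.Icc 1 n, y j ^ (if j ≤ m then x (m / j) else 0) := by
    intro m hm
    rw [hB]
    rw [show (∏ k ∈ Finset.Icc 1 m, y k ^ x (m / k))
        = ∏ j ∈ Finset.Icc 1 m, y j ^ (if j ≤ m then x (m / j) else 0) from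
      Finset.prod_congr rfl (fun j hj => by
        simp only [Finset.mem_Icc] at hj
        rw [if_pos hj.2])]
    apply Finset.prod_subset
    · intro j hj
      simp only [Finset.mem_Icc] at hj ⊢
      omega
    · intro j hj hj'
      simp only [Finset.mem_Icc] at hj hj'
      rw [if_neg (by omega)]
      simp
  rw [hrw k hkn, hrw (n - k) (by omega), hB n, ← Finset.prod_mul_distrib]
  apply Finset.prod_dvd_prod_of_dvd
  intro j hj
  simp only [Finset.mem_Icc] at hj
  rw [← pow_add]
  exact pow_dvd_pow _ (key j hj.1)
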